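/- For all a > 0, y real, q ≠ 0, and t > 0, ∫₀ᵗ exp(−y²/(4a(t−τ))) · exp(−q²/(4aτ)) · 1/(τ^{3/2}·√(t−τ)) dτ = (2√(πa)/(|q|√t)) · exp(−(|y|+|q|)²/(4at)). -/

import Mathlib

open Real MeasureTheory Set


lemma contK (p r c : ℝ) : ContinuousOn (fun x : ℝ => Real.exp (-(p*x + r/x)) / (x ^ c * Real.sqrt x)) (Ioi 0) := by
  apply ContinuousOn.div
  · apply Real.continuous_exp.comp_continuousOn
    apply ContinuousOn.neg
    apply ContinuousOn.add (by fun_prop)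
    exact ContinuousOn.div continuousOn_const continuousOn_id fun z hz => ne_of_gt hz
  · apply ContinuousOn.mul ?_ (by fun_prop)
    exact ContinuousOn.rpow_const continuousOn_id (fun z hz => Or.inl (ne_of_gt hz))
  · intro z hz
    have : (0:ℝ) < z ^ c := Real.rpow_pos_of_pos hz c
    have := Real.sqrt_pos.mpr (mem_Ioi.mp hz)
    positivity

lemma intK (p r : ℝ) (hp : 0 < p) (hr : 0 ≤ r) :
    IntegrableOn (fun x : ℝ => Real.exp (-(p*x + r/x)) / Real.sqrt x) (Ioi 0) := by
  apply Integrable.mono' (g := fun x : ℝ => x ^ (-(1:ℝ)/2) * Real.exp (-p * x ^ (1:ℝ)))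
  · exact integrableOn_rpow_mul_exp_neg_mul_rpow (by norm_num) one_pos hp
  · have h : AEStronglyMeasurable (fun x : ℝ => Real.exp (-(p*x + r/x)) / (x ^ (0:ℝ) * Real.sqrt x)) (volume.restrict (Ioi 0)) :=
      (contK p r 0).aestronglyMeasurable measurableSet_Ioi
    apply h.congr
    rw [Filter.EventuallyEq, ae_restrict_iff' measurableSet_Ioi]
    filter_upwards with x hx
    rw [Real.rpow_zero, one_mul]
  · rw [ae_restrict_iff' measurableSet_Ioi]
    filter_upwards with x hx
    rw [mem_Ioi] at hx
    have hsx : 0 < Real.sqrt x := Real.sqrt_pos.mpr hx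
    rw [Real.norm_eq_abs, abs_of_nonneg (by positivity)]
    have h1 : Real.exp (-(p*x + r/x)) / Real.sqrt x ≤ Real.exp (-(p*x)) / Real.sqrt x := by
      apply (div_le_div_iff_of_pos_right hsx).mpr
      apply Real.exp_le_exp.mpr
      have : 0 ≤ r / x := by positivity
      linarith
    refine h1.trans (le_of_eq ?_)
    rw [Real.rpow_one, show (-(1:ℝ)/2) = (-(1/2:ℝ)) by norm_num, Real.rpow_neg hx.le,
      ← Real.sqrt_eq_rpow, neg_mul]
    ring

lemma intL (p r : ℝ) (hp : 0 < p) (hr : 0 < r) :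
    IntegrableOn (fun x : ℝ => Real.exp (-(p*x + r/x)) / (x * Real.sqrt x)) (Ioi 0) := by
  apply Integrable.mono' (g := fun x : ℝ => r⁻¹ * (x ^ (-(1:ℝ)/2) * Real.exp (-p * x ^ (1:ℝ))))
  · exact (integrableOn_rpow_mul_exp_neg_mul_rpow (by norm_num) one_pos hp).const_mul _
  · have h : AEStronglyMeasurable (fun x : ℝ => Real.exp (-(p*x + r/x)) / (x ^ (1:ℝ) * Real.sqrt x)) (volume.restrict (Ioi 0)) :=
      (contK p r 1).aestronglyMeasurable measurableSet_Ioi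
    apply h.congr
    rw [Filter.EventuallyEq, ae_restrict_iff' measurableSet_Ioi]
    filter_upwards with x hx
    rw [Real.rpow_one]
  · rw [ae_restrict_iff' measurableSet_Ioi]
    filter_upwards with x hx
    rw [mem_Ioi] at hx
    have hsx : 0 < Real.sqrt x := Real.sqrt_pos.mpr hx
    rw [Real.norm_eq_abs, abs_of_nonneg (by positivity)]
    have key : Real.exp (-(r/x)) ≤ x / r := by
      rw [Real.exp_neg]
      rw [inv_le_comm₀ (Real.exp_pos _) (by positivity)]
      calc (x/r)⁻¹ = r/x := by rw [inv_div]
      _ ≤ r/x + 1 := by linarith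
      _ ≤ Real.exp (r/x) := Real.add_one_le_exp _
    have expand : Real.exp (-(p*x + r/x)) = Real.exp (-(p*x)) * Real.exp (-(r/x)) := by
      rw [← Real.exp_add]; ring_nf
    rw [expand]
    have h1 : Real.exp (-(p*x)) * Real.exp (-(r/x)) / (x * Real.sqrt x)
        ≤ Real.exp (-(p*x)) * (x/r) / (x * Real.sqrt x) := by
      apply (div_le_div_iff_of_pos_right (by positivity)).mpr
      exact mul_le_mul_of_nonneg_left key (Real.exp_pos _).le
    refine h1.trans (le_of_eq ?_)
    rw [Real.rpow_one, show (-(1:ℝ)/2) = (-(1/2:ℝ)) by norm_num, Real.rpow_neg hx.le,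
      ← Real.sqrt_eq_rpow, neg_mul]
    field_simp


lemma subL (p r : ℝ) (hp : 0 < p) (hr : 0 < r) :
    (∫ x in Ioi (0:ℝ), Real.exp (-(p*x + r/x)) / Real.sqrt x)
      = Real.sqrt r / Real.sqrt p * ∫ x in Ioi (0:ℝ), Real.exp (-(p*x + r/x)) / (x * Real.sqrt x) := by
  have himg : (fun u : ℝ => r/(p*u)) '' (Ioi 0) = Ioi 0 := by
    ext z; simp only [mem_image, mem_Ioi]
    constructor
    · rintro ⟨u, hu, rfl⟩; positivity
    · intro hz; exact ⟨r/(p*z), by positivity, by field_simp⟩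
  have hderiv : ∀ u ∈ Ioi (0:ℝ), HasDerivWithinAt (fun u : ℝ => r/(p*u)) (-(r/(p*u^2))) (Ioi 0) u := by
    intro u hu; rw [mem_Ioi] at hu
    have h := (((hasDerivAt_id u).const_mul p).inv (by positivity : p * id u ≠ 0)).const_mul r
    simp only [id_eq] at h
    have h2 : r * (-(p*1)/(p*u)^2) = -(r/(p*u^2)) := by field_simp
    rw [h2] at h
    exact h.hasDerivWithinAt
  have hinj : InjOn (fun u : ℝ => r/(p*u)) (Ioi 0) := by
    intro u1 h1 u2 h2 h
    rw [mem_Ioi] at h1 h2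
    simp only at h
    rw [div_eq_div_iff (by positivity) (by positivity)] at h
    have h3 := mul_left_cancel₀ hr.ne' h
    exact (mul_left_cancel₀ hp.ne' h3).symm
  calc (∫ x in Ioi (0:ℝ), Real.exp (-(p*x + r/x)) / Real.sqrt x)
      = ∫ x in (fun u : ℝ => r/(p*u)) '' (Ioi 0), Real.exp (-(p*x + r/x)) / Real.sqrt x := by rw [himg]
    _ = ∫ u in Ioi (0:ℝ), |(-(r/(p*u^2)))| • (Real.exp (-(p*(r/(p*u)) + r/(r/(p*u)))) / Real.sqrt (r/(p*u))) :=
        integral_image_eq_integral_abs_deriv_smul measurableSet_Ioi hderiv hinj _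
    _ = ∫ u in Ioi (0:ℝ), Real.sqrt r / Real.sqrt p * (Real.exp (-(p*u + r/u)) / (u * Real.sqrt u)) := by
        apply setIntegral_congr_fun measurableSet_Ioi
        intro u hu
        rw [mem_Ioi] at hu
        simp only
        have harg : -(p*(r/(p*u)) + r/(r/(p*u))) = -(p*u + r/u) := by field_simp; ring
        rw [harg, smul_eq_mul, abs_neg, abs_of_pos (by positivity)]
        rw [Real.sqrt_div hr.le, Real.sqrt_mul hp.le]
        have hsu : (0:ℝ) < Real.sqrt u := Real.sqrt_pos.mpr hu
        have hsp : (0:ℝ) < Real.sqrt p := Real.sqrt_pos.mpr hp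
        have hsr : (0:ℝ) < Real.sqrt r := Real.sqrt_pos.mpr hr
        have hu2 : Real.sqrt u ^ 2 = u := Real.sq_sqrt hu.le
        have hp2 : Real.sqrt p ^ 2 = p := Real.sq_sqrt hp.le
        have hr2 : Real.sqrt r ^ 2 = r := Real.sq_sqrt hr.le
        field_simp
        ring_nf
        rw [hu2, hp2, hr2]
        ring
    _ = Real.sqrt r / Real.sqrt p * ∫ x in Ioi (0:ℝ), Real.exp (-(p*x + r/x)) / (x * Real.sqrt x) :=
        integral_const_mul _ _


lemma subM (sp sr : ℝ) (hsp : 0 < sp) (hsr : 0 < sr) :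
    (∫ x in Ioi (0:ℝ), (sp/(2*Real.sqrt x) + sr/(2*(x*Real.sqrt x))) * Real.exp (-(sp^2*x + sr^2/x)))
      = Real.sqrt π * Real.exp (-(2*(sp*sr))) := by
  set u : ℝ → ℝ := fun x => sp * Real.sqrt x - sr * (Real.sqrt x)⁻¹ with hu_def
  have himg : u '' (Ioi 0) = univ := by
    apply eq_univ_of_forall
    intro v
    set D := Real.sqrt (v^2 + 4*(sp*sr)) with hD
    have hD2 : D^2 = v^2 + 4*(sp*sr) := Real.sq_sqrt (by positivity)
    have hD0 : (0:ℝ) ≤ D := Real.sqrt_nonneg _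
    have hDgt : -v < D := by nlinarith [mul_pos hsp hsr]
    set s : ℝ := (v + D)/(2*sp) with hs_def
    have hs : 0 < s := div_pos (by linarith) (by positivity)
    refine ⟨s^2, by simp [mem_Ioi]; positivity, ?_⟩
    have hss : Real.sqrt (s^2) = s := Real.sqrt_sq hs.le
    have key : sp * s^2 = v*s + sr := by
      rw [hs_def]
      field_simp
      nlinarith [hD2]
    simp only [hu_def, hss]
    field_simp
    nlinarith [key]
  have hderiv : ∀ x ∈ Ioi (0:ℝ),
      HasDerivWithinAt u (sp/(2*Real.sqrt x) + sr/(2*(x*Real.sqrt x))) (Ioi 0) x := by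
    intro x hx
    rw [mem_Ioi] at hx
    have hsx : 0 < Real.sqrt x := Real.sqrt_pos.mpr hx
    have h1 := (Real.hasDerivAt_sqrt hx.ne').const_mul sp
    have h2 := ((Real.hasDerivAt_sqrt hx.ne').inv hsx.ne').const_mul sr
    have h := h1.sub h2
    have heq : sp * (1/(2*Real.sqrt x)) - sr * (-(1/(2*Real.sqrt x))/(Real.sqrt x)^2)
        = sp/(2*Real.sqrt x) + sr/(2*(x*Real.sqrt x)) := by
      rw [Real.sq_sqrt hx.le]
      field_simp
      ring
    rw [heq] at h
    exact h.hasDerivWithinAt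
  have hinj : InjOn u (Ioi 0) := by
    have hmono : StrictMonoOn u (Ioi 0) := by
      intro a ha b hb hab
      rw [mem_Ioi] at ha hb
      have h1 : Real.sqrt a < Real.sqrt b := Real.sqrt_lt_sqrt ha.le hab
      have hsa : 0 < Real.sqrt a := Real.sqrt_pos.mpr ha
      have h2 : sp * Real.sqrt a < sp * Real.sqrt b := mul_lt_mul_of_pos_left h1 hsp
      have h3 : (Real.sqrt b)⁻¹ < (Real.sqrt a)⁻¹ := by
        exact inv_strictAnti₀ hsa h1
      have h4 : sr * (Real.sqrt b)⁻¹ < sr * (Real.sqrt a)⁻¹ := by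
        exact mul_lt_mul_of_pos_left h3 hsr
      simp only [hu_def]
      linarith
    exact hmono.injOn
  have him := integral_image_eq_integral_abs_deriv_smul measurableSet_Ioi hderiv hinj
      (fun v => Real.exp (-v^2))
  rw [himg] at him
  rw [MeasureTheory.setIntegral_univ] at him
  have hgauss : (∫ v : ℝ, Real.exp (-v^2)) = Real.sqrt π := by
    have := integral_gaussian 1
    simpa using this
  rw [hgauss] at him
  have hcongr : (∫ x in Ioi (0:ℝ), |sp/(2*Real.sqrt x) + sr/(2*(x*Real.sqrt x))| • Real.exp (-(u x)^2))
      = ∫ x in Ioi (0:ℝ), Real.exp (2*(sp*sr)) * ((sp/(2*Real.sqrt x) + sr/(2*(x*Real.sqrt x))) * Real.exp (-(sp^2*x + sr^2/x))) := by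
    apply setIntegral_congr_fun measurableSet_Ioi
    intro x hx
    rw [mem_Ioi] at hx
    have hsx : 0 < Real.sqrt x := Real.sqrt_pos.mpr hx
    have hx2 : Real.sqrt x ^ 2 = x := Real.sq_sqrt hx.le
    have habs : |sp/(2*Real.sqrt x) + sr/(2*(x*Real.sqrt x))| = sp/(2*Real.sqrt x) + sr/(2*(x*Real.sqrt x)) := by
      apply abs_of_pos
      have : 0 < sp/(2*Real.sqrt x) := by positivity
      have : 0 < sr/(2*(x*Real.sqrt x)) := by positivity
      linarith
    have hsq : (u x)^2 = sp^2*x + sr^2/x - 2*(sp*sr) := by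
      simp only [hu_def]
      have expand : (sp * Real.sqrt x - sr * (Real.sqrt x)⁻¹)^2
          = sp^2*(Real.sqrt x)^2 - 2*(sp*sr)*(Real.sqrt x * (Real.sqrt x)⁻¹) + sr^2*((Real.sqrt x)^2)⁻¹ := by
        field_simp
        ring
      rw [expand, hx2, mul_inv_cancel₀ hsx.ne']
      field_simp
      ring
    simp only
    rw [smul_eq_mul, habs, hsq]
    rw [show -(sp^2*x + sr^2/x - 2*(sp*sr)) = 2*(sp*sr) + -(sp^2*x + sr^2/x) by ring,
      Real.exp_add]
    ring
  rw [hcongr, integral_const_mul] at him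
  have hexp : (0:ℝ) < Real.exp (2*(sp*sr)) := Real.exp_pos _
  field_simp [Real.exp_neg] at him ⊢
  rw [him, mul_right_comm, ← Real.exp_add]
  simp



lemma lemK (p r : ℝ) (hp : 0 < p) (hr : 0 ≤ r) :
    (∫ x in Ioi (0:ℝ), Real.exp (-(p*x + r/x)) / Real.sqrt x)
      = Real.sqrt π / Real.sqrt p * Real.exp (-(2*(Real.sqrt p * Real.sqrt r))) := by
  have hsp : 0 < Real.sqrt p := Real.sqrt_pos.mpr hp
  rcases eq_or_lt_of_le hr with hr0 | hrpos
  · -- r = 0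
    subst hr0
    have hcongr : (∫ x in Ioi (0:ℝ), Real.exp (-(p*x + 0/x)) / Real.sqrt x)
        = ∫ x in Ioi (0:ℝ), x ^ ((1:ℝ)/2 - 1) * Real.exp (-(p*x)) := by
      apply setIntegral_congr_fun measurableSet_Ioi
      intro x hx
      rw [mem_Ioi] at hx
      simp only
      rw [zero_div, add_zero, show (1:ℝ)/2-1 = -(1/2:ℝ) by norm_num,
        Real.rpow_neg hx.le, ← Real.sqrt_eq_rpow]
      ring
    rw [hcongr, Real.integral_rpow_mul_exp_neg_mul_Ioi (by norm_num) hp,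
      Real.Gamma_one_half_eq]
    rw [← Real.sqrt_eq_rpow, Real.sqrt_zero, mul_zero, mul_zero, neg_zero, Real.exp_zero,
      one_div, Real.sqrt_inv]
    field_simp
  · have hsr : 0 < Real.sqrt r := Real.sqrt_pos.mpr hrpos
    have hp2 : Real.sqrt p ^ 2 = p := Real.sq_sqrt hp.le
    have hr2 : Real.sqrt r ^ 2 = r := Real.sq_sqrt hr
    have hM := subM (Real.sqrt p) (Real.sqrt r) hsp hsr
    rw [hp2, hr2] at hM
    have hsplit : (∫ x in Ioi (0:ℝ),
        (Real.sqrt p/(2*Real.sqrt x) + Real.sqrt r/(2*(x*Real.sqrt x))) * Real.exp (-(p*x + r/x)))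
        = (Real.sqrt p/2) * (∫ x in Ioi (0:ℝ), Real.exp (-(p*x + r/x)) / Real.sqrt x)
          + (Real.sqrt r/2) * (∫ x in Ioi (0:ℝ), Real.exp (-(p*x + r/x)) / (x * Real.sqrt x)) := by
      rw [← integral_const_mul, ← integral_const_mul, ← integral_add]
      · apply setIntegral_congr_fun measurableSet_Ioi
        intro x hx
        simp only
        ring
      · exact ((intK p r hp hr).const_mul _)
      · exact ((intL p r hp hrpos).const_mul _)
    rw [hsplit] at hM
    have hKL := subL p r hp hrpos
    set K := ∫ x in Ioi (0:ℝ), Real.exp (-(p*x + r/x)) / Real.sqrt x with hK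
    set L := ∫ x in Ioi (0:ℝ), Real.exp (-(p*x + r/x)) / (x * Real.sqrt x) with hL
    have hLval : L = Real.sqrt p / Real.sqrt r * K := by
      rw [hKL]
      field_simp
    rw [hLval] at hM
    have hM2 : Real.sqrt p * K = Real.sqrt π * Real.exp (-(2*(Real.sqrt p * Real.sqrt r))) := by
      rw [← hM]
      field_simp
      ring
    rw [div_mul_eq_mul_div, eq_div_iff hsp.ne']
    linarith [hM2]



theorem stmt2 (a y q t : ℝ) (ha : 0 < a) (hq : q ≠ 0) (ht : 0 < t) :
    (∫ τ in Set.Ioo (0 : ℝ) t,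
        Real.exp (-y ^ 2 / (4 * a * (t - τ))) * Real.exp (-q ^ 2 / (4 * a * τ)) *
          (1 / (τ ^ ((3 : ℝ) / 2) * Real.sqrt (t - τ)))) =
      (2 * Real.sqrt (π * a) / (|q| * Real.sqrt t)) *
        Real.exp (-(|y| + |q|) ^ 2 / (4 * a * t)) := by
  have hq2 : 0 < q^2 := lt_of_le_of_ne (sq_nonneg q) (fun h => hq (by simpa [pow_eq_zero_iff] using h.symm))
  set p : ℝ := q^2/(4*a*t) with hp_def
  set r : ℝ := y^2/(4*a*t) with hr_def
  have hp : 0 < p := by positivity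
  have hr : 0 ≤ r := by positivity
  set f : ℝ → ℝ := fun x => t/(1+x) with hf_def
  have himg : f '' (Ioi 0) = Ioo 0 t := by
    ext z
    simp only [mem_image, mem_Ioi, mem_Ioo, hf_def]
    constructor
    · rintro ⟨x, hx, rfl⟩
      exact ⟨div_pos ht (by linarith), div_lt_self ht (by linarith)⟩
    · rintro ⟨hz0, hzt⟩
      refine ⟨t/z - 1, by simpa using (one_lt_div hz0).mpr hzt, ?_⟩
      field_simp
      ring
  have hderiv : ∀ x ∈ Ioi (0:ℝ), HasDerivWithinAt f (-(t/(1+x)^2)) (Ioi 0) x := by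
    intro x hx
    rw [mem_Ioi] at hx
    have h1x : (0:ℝ) < 1 + x := by linarith
    have h := (hasDerivAt_const x t).div ((hasDerivAt_id x).const_add 1) h1x.ne'
    have h2 : (0 * (1 + id x) - t * 1)/(1 + id x)^2 = -(t/(1+x)^2) := by
      simp only [id_eq]; field_simp; ring
    rw [h2] at h
    exact h.hasDerivWithinAt
  have hinj : InjOn f (Ioi 0) := by
    intro x1 h1 x2 h2 h
    rw [mem_Ioi] at h1 h2
    simp only [hf_def] at h
    rw [div_eq_div_iff (by linarith) (by linarith)] at h
    have := mul_left_cancel₀ ht.ne' h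
    linarith
  calc (∫ τ in Set.Ioo (0 : ℝ) t,
        Real.exp (-y ^ 2 / (4 * a * (t - τ))) * Real.exp (-q ^ 2 / (4 * a * τ)) *
          (1 / (τ ^ ((3 : ℝ) / 2) * Real.sqrt (t - τ))))
      = ∫ τ in f '' (Ioi 0),
        Real.exp (-y ^ 2 / (4 * a * (t - τ))) * Real.exp (-q ^ 2 / (4 * a * τ)) *
          (1 / (τ ^ ((3 : ℝ) / 2) * Real.sqrt (t - τ))) := by rw [himg]
    _ = ∫ x in Ioi (0:ℝ), |(-(t/(1+x)^2))| •
        (Real.exp (-y ^ 2 / (4 * a * (t - f x))) * Real.exp (-q ^ 2 / (4 * a * f x)) *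
          (1 / ((f x) ^ ((3 : ℝ) / 2) * Real.sqrt (t - f x)))) :=
        integral_image_eq_integral_abs_deriv_smul measurableSet_Ioi hderiv hinj _
    _ = ∫ x in Ioi (0:ℝ), (Real.exp (-(p+r))/t) * (Real.exp (-(p*x + r/x)) / Real.sqrt x) := by
        apply setIntegral_congr_fun measurableSet_Ioi
        intro x hx
        rw [mem_Ioi] at hx
        have h1x : (0:ℝ) < 1 + x := by linarith
        simp only [hf_def, smul_eq_mul]
        have habs : |(-(t/(1+x)^2))| = t/(1+x)^2 := by
          rw [abs_neg, abs_of_pos (by positivity)]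
        have hsub : t - t/(1+x) = t*x/(1+x) := by field_simp; ring
        have he1 : -y ^ 2 / (4 * a * (t*x/(1+x))) = -(r/x) - r := by
          rw [hr_def]; field_simp; ring
        have he2 : -q ^ 2 / (4 * a * (t/(1+x))) = -(p*x) - p := by
          rw [hp_def]; field_simp; ring
        have htx : (0:ℝ) < t/(1+x) := div_pos ht h1x
        have h32 : (t/(1+x)) ^ ((3:ℝ)/2) = (t/(1+x)) * Real.sqrt (t/(1+x)) := by
          rw [show ((3:ℝ)/2) = (1:ℝ) + 1/2 by norm_num, Real.rpow_add htx, Real.rpow_one,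
            ← Real.sqrt_eq_rpow]
        have hsq1 : Real.sqrt (t/(1+x)) = Real.sqrt t / Real.sqrt (1+x) := Real.sqrt_div ht.le _
        have hsq2 : Real.sqrt (t*x/(1+x)) = Real.sqrt t * Real.sqrt x / Real.sqrt (1+x) := by
          rw [Real.sqrt_div (by positivity), Real.sqrt_mul ht.le]
        rw [habs, hsub, he1, he2, h32, hsq1, hsq2, ← Real.exp_add,
          show (-(r/x) - r) + (-(p*x) - p) = (-(p+r)) + (-(p*x + r/x)) by ring,
          Real.exp_add]
        have hst : Real.sqrt t ^ 2 = t := Real.sq_sqrt ht.le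
        have hsx : Real.sqrt x ^ 2 = x := Real.sq_sqrt hx.le
        have hs1x : Real.sqrt (1+x) ^ 2 = 1 + x := Real.sq_sqrt h1x.le
        have hstp : (0:ℝ) < Real.sqrt t := Real.sqrt_pos.mpr ht
        have hsxp : (0:ℝ) < Real.sqrt x := Real.sqrt_pos.mpr hx
        have hs1xp : (0:ℝ) < Real.sqrt (1+x) := Real.sqrt_pos.mpr h1x
        field_simp
        ring_nf
        simp only [hst, hsx, hs1x]
        ring
    _ = (Real.exp (-(p+r))/t) * ∫ x in Ioi (0:ℝ), Real.exp (-(p*x + r/x)) / Real.sqrt x :=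
        integral_const_mul _ _
    _ = (Real.exp (-(p+r))/t) * (Real.sqrt π / Real.sqrt p * Real.exp (-(2*(Real.sqrt p * Real.sqrt r)))) := by
        rw [lemK p r hp hr]
    _ = (2 * Real.sqrt (π * a) / (|q| * Real.sqrt t)) *
        Real.exp (-(|y| + |q|) ^ 2 / (4 * a * t)) := by
        have hsa2 : Real.sqrt a ^ 2 = a := Real.sq_sqrt ha.le
        have hst2 : Real.sqrt t ^ 2 = t := Real.sq_sqrt ht.le
        have hsap : (0:ℝ) < Real.sqrt a := Real.sqrt_pos.mpr ha
        have hstp : (0:ℝ) < Real.sqrt t := Real.sqrt_pos.mpr ht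
        have hqp : (0:ℝ) < |q| := abs_pos.mpr hq
        have h4at : (4*a*t) = (2*(Real.sqrt a*Real.sqrt t))^2 := by
          rw [mul_pow, mul_pow, hsa2, hst2]; ring
        have hsp_val : Real.sqrt p = |q| / (2*(Real.sqrt a*Real.sqrt t)) := by
          rw [hp_def, Real.sqrt_div (sq_nonneg q), Real.sqrt_sq_eq_abs, h4at,
            Real.sqrt_sq (by positivity)]
        have hsr_val : Real.sqrt r = |y| / (2*(Real.sqrt a*Real.sqrt t)) := by
          rw [hr_def, Real.sqrt_div (sq_nonneg y), Real.sqrt_sq_eq_abs, h4at,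
            Real.sqrt_sq (by positivity)]
        have hexp_comb : -(p+r) + -(2*(Real.sqrt p*Real.sqrt r)) = -(|y|+|q|)^2/(4*a*t) := by
          rw [hsp_val, hsr_val, hp_def, hr_def]
          field_simp
          ring_nf
          simp only [hsa2, hst2]
          linear_combination (a*t*2) * (sq_abs q) + (a*t*2) * (sq_abs y)
        have hcoef2 : Real.sqrt π / Real.sqrt p * (1/t) = 2*Real.sqrt (π*a)/(|q| * Real.sqrt t) := by
          rw [hsp_val, Real.sqrt_mul Real.pi_pos.le]
          field_simp
          ring_nf
          simp only [hsa2, hst2]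
        calc Real.exp (-(p+r))/t * (Real.sqrt π / Real.sqrt p * Real.exp (-(2*(Real.sqrt p * Real.sqrt r))))
            = (Real.sqrt π / Real.sqrt p * (1/t)) * (Real.exp (-(p+r)) * Real.exp (-(2*(Real.sqrt p*Real.sqrt r)))) := by ring
          _ = (Real.sqrt π / Real.sqrt p * (1/t)) * Real.exp (-(|y|+|q|)^2/(4*a*t)) := by
              rw [← Real.exp_add, hexp_comb]
          _ = (2 * Real.sqrt (π * a) / (|q| * Real.sqrt t)) * Real.exp (-(|y|+|q|)^2/(4*a*t)) := by
              rw [hcoef2]
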